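/- Let T be a tree of sequences and ξ an inductive probability measure on T. Then there exists a probability tree p on T such that Ξ_p(t) = ξ(t) for all t ∈ T. -/

import Mathlib

open scoped ENNReal
open MeasureTheory

noncomputable section

/-- A tree of sequences: a nonempty set of finite lists of naturals closed under prefixes. -/
def IsTree (T : Set (List ℕ)) : Prop :=
  T.Nonempty ∧ ∀ s t : List ℕ, s <+: t → t ∈ T → s ∈ T

/-- `t` is a maximal node of `T`: it has no successor in `T`. -/
def IsMaxNode (T : Set (List ℕ)) (t : List ℕ) : Prop :=
  ∀ k : ℕ, t ++ [k] ∉ T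

/-- A probability tree on `T`. -/
def IsProbTree (T : Set (List ℕ)) (p : List ℕ → ℕ → ℝ≥0∞) : Prop :=
  ∀ t ∈ T, ¬ IsMaxNode T t →
    (∀ k : ℕ, t ++ [k] ∉ T → p t k = 0) ∧ (∑' k : ℕ, p t k = 1)

/-- The measure induced by a probability tree: `Ξ_p(t) = ∏_{i<|t|} p (t↾i) (t i)`. -/
def Xi (p : List ℕ → ℕ → ℝ≥0∞) (t : List ℕ) : ℝ≥0∞ :=
  ∏ i ∈ Finset.range t.length, p (t.take i) (t.getD i 0)

/-- An inductive probability measure on `T`. -/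
def IsIPM (T : Set (List ℕ)) (ξ : List ℕ → ℝ≥0∞) : Prop :=
  ξ [] = 1 ∧ ∀ t ∈ T, ¬ IsMaxNode T t →
    ξ t = ∑' k : {k : ℕ // t ++ [k] ∈ T}, ξ (t ++ [k.1])

/-- The set of infinite branches of `T`. -/
def limT (T : Set (List ℕ)) : Set (ℕ → ℕ) :=
  {x | ∀ n : ℕ, (List.range n).map x ∈ T}

/-- `T` is pruned: every node has a successor in `T`. -/
def Pruned (T : Set (List ℕ)) : Prop := ∀ t ∈ T, ∃ k : ℕ, t ++ [k] ∈ T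

/-- The basic clopen set `[t]` of branches through `t`. -/
def cyl (T : Set (List ℕ)) (t : List ℕ) : Set ↥(limT T) :=
  {x | (List.range t.length).map x.1 = t}

theorem stmt4 (T : Set (List ℕ)) (ξ : List ℕ → ℝ≥0∞)
    (hT : IsTree T) (hξ : IsIPM T ξ) :
    ∃ p : List ℕ → ℕ → ℝ≥0∞, IsProbTree T p ∧ ∀ t ∈ T, Xi p t = ξ t := by
  classical
  obtain ⟨hξ1, hξ2⟩ := hξ
  have hle : ∀ t ∈ T, ∀ k : ℕ, t ++ [k] ∈ T → ξ (t ++ [k]) ≤ ξ t := by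
    intro t ht k hk
    have hnm : ¬ IsMaxNode T t := fun h => h k hk
    rw [hξ2 t ht hnm]
    exact ENNReal.le_tsum (⟨k, hk⟩ : {k : ℕ // t ++ [k] ∈ T})
  have hone : ∀ t, t ∈ T → ξ t ≤ 1 := by
    intro t
    induction t using List.reverseRecOn with
    | nil => intro _; exact le_of_eq hξ1
    | append_singleton t k ih =>
      intro h
      have ht : t ∈ T := hT.2 t (t ++ [k]) (List.prefix_append _ _) h
      exact le_trans (hle t ht k h) (ih ht)
  set p : List ℕ → ℕ → ℝ≥0∞ := fun t k =>
    if t ++ [k] ∈ T then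
      (if ξ t = 0 then
        (if hk' : ∃ j : ℕ, t ++ [j] ∈ T then (if k = Nat.find hk' then 1 else 0) else 0)
      else ξ (t ++ [k]) / ξ t) else 0 with hp
  have hXi : ∀ t k, Xi p (t ++ [k]) = Xi p t * p t k := by
    intro t k
    unfold Xi
    rw [List.length_append, List.length_singleton, Finset.prod_range_succ]
    congr 1
    · apply Finset.prod_congr rfl
      intro i hi
      rw [Finset.mem_range] at hi
      rw [List.take_append_of_le_length (le_of_lt hi),
        List.getD_append _ _ _ _ hi]
    · rw [List.take_append_of_le_length le_rfl, List.take_length]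
      congr 1
      simp [List.getD_append_right]
  have hzero : ∀ t k, t ++ [k] ∈ T → ξ t * p t k = ξ (t ++ [k]) := by
    intro t k hk
    by_cases h0 : ξ t = 0
    · have ht : t ∈ T := hT.2 t (t ++ [k]) (List.prefix_append _ _) hk
      have := hle t ht k hk
      rw [h0] at this
      simp [le_antisymm this bot_le, h0]
    · have hfin : ξ t ≠ ∞ := by
        have ht : t ∈ T := hT.2 t (t ++ [k]) (List.prefix_append _ _) hk
        exact ne_top_of_le_ne_top ENNReal.one_ne_top (hone t ht)
      rw [hp]
      simp only [hk, if_true, h0, if_false]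
      exact ENNReal.mul_div_cancel h0 hfin
  refine ⟨p, ?_, ?_⟩
  · intro t ht hnm
    constructor
    · intro k hk; simp [hp, hk]
    · by_cases h0 : ξ t = 0
      · have hex : ∃ j : ℕ, t ++ [j] ∈ T := by
          by_contra h
          push_neg at h
          exact hnm h
        have hpe : ∀ k : ℕ, p t k = if k = Nat.find hex then 1 else 0 := by
          intro k
          by_cases hk : t ++ [k] ∈ T
          · simp [hp, hk, h0, hex]
          · have : k ≠ Nat.find hex := by
              intro h; rw [h] at hk; exact hk (Nat.find_spec hex)
            simp [hp, hk, this]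
        simp only [hpe]
        exact tsum_ite_eq (Nat.find hex) 1
      · have hfin : ξ t ≠ ∞ := ne_top_of_le_ne_top ENNReal.one_ne_top (hone t ht)
        have hpe : ∀ k : ℕ, p t k =
            Set.indicator {k : ℕ | t ++ [k] ∈ T} (fun k => ξ (t ++ [k]) / ξ t) k := by
          intro k
          by_cases hk : t ++ [k] ∈ T
          · simp [hp, hk, h0, Set.indicator_of_mem (hk : k ∈ {k : ℕ | t ++ [k] ∈ T})]
          · simp [hp, hk, Set.indicator_of_notMem (hk : k ∉ {k : ℕ | t ++ [k] ∈ T})]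
        calc ∑' k : ℕ, p t k
            = ∑' k : ℕ, Set.indicator {k : ℕ | t ++ [k] ∈ T}
                (fun k => ξ (t ++ [k]) / ξ t) k := by simp only [hpe]
          _ = ∑' k : {k : ℕ | t ++ [k] ∈ T}, ξ (t ++ [k.1]) / ξ t :=
              (tsum_subtype _ _).symm
          _ = (∑' k : {k : ℕ | t ++ [k] ∈ T}, ξ (t ++ [k.1])) / ξ t := by
              simp only [div_eq_mul_inv]; exact ENNReal.tsum_mul_right
          _ = ξ t / ξ t := congrArg (· / ξ t) (hξ2 t ht hnm).symm
          _ = 1 := ENNReal.div_self h0 hfin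
  · intro t
    induction t using List.reverseRecOn with
    | nil => intro _; simp [Xi, hξ1]
    | append_singleton t k ih =>
      intro h
      have ht : t ∈ T := hT.2 t (t ++ [k]) (List.prefix_append _ _) h
      rw [hXi, ih ht]
      exact hzero t k h
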